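/- Let P be uniform on the closed interval [a,b] (a<b). For each n ≥ 1, the set {a + (2j−1)(b−a)/(2n) : 1 ≤ j ≤ n} attains the minimum of ∫ min_{c∈γ}(x−c)² dP over all sets γ ⊂ ℝ of at most n points, and the minimum value (the nth quantization error) equals (b−a)²/(12n²). -/

import Mathlib

open MeasureTheory Set intervalIntegral

noncomputable def unif (a b : ℝ) : Measure ℝ :=
  (ENNReal.ofReal (b - a))⁻¹ • (volume.restrict (Icc a b))

noncomputable def mix (p : ℝ) (P₁ P₂ : Measure ℝ) : Measure ℝ :=
  ENNReal.ofReal p • P₁ + ENNReal.ofReal (1 - p) • P₂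

noncomputable def distortion (P : Measure ℝ) (γ : Finset ℝ) : ℝ :=
  ∫ x, sInf ((fun c => (x - c) ^ 2) '' (γ : Set ℝ)) ∂P

noncomputable def quantErr (P : Measure ℝ) (n : ℕ) : ℝ :=
  sInf { v | ∃ γ : Finset ℝ, γ.Nonempty ∧ γ.card ≤ n ∧ v = distortion P γ }

def IsOptimal (P : Measure ℝ) (n : ℕ) (γ : Finset ℝ) : Prop :=
  γ.Nonempty ∧ γ.card ≤ n ∧ distortion P γ = quantErr P n

lemma distortion_eq (a b : ℝ) (hab : a < b) (γ : Finset ℝ) (h : γ.Nonempty) :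
    distortion (unif a b) γ = (b - a)⁻¹ * ∫ x in a..b, γ.inf' h (fun c => (x - c)^2) := by
  have h1 : (fun x => sInf ((fun c => (x - c) ^ 2) '' (γ : Set ℝ)))
      = fun x => γ.inf' h (fun c => (x - c)^2) := by
    funext x
    exact (Finset.inf'_eq_csInf_image γ h _).symm
  rw [distortion, unif, h1, MeasureTheory.integral_smul_measure, ENNReal.toReal_inv,
    ENNReal.toReal_ofReal (by linarith : (0:ℝ) ≤ b - a), smul_eq_mul]
  congr 1
  rw [show ∫ x, γ.inf' h (fun c => (x - c)^2) ∂(volume.restrict (Icc a b))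
      = ∫ x in Icc a b, γ.inf' h (fun c => (x - c)^2) from rfl,
    integral_Icc_eq_integral_Ioc, ← intervalIntegral.integral_of_le hab.le]

lemma integral_sq (c u v : ℝ) : ∫ x in u..v, (x - c)^2 = ((v-c)^3 - (u-c)^3)/3 := by
  rw [show (∫ x in u..v, (x - c)^2) = ∫ x in u..v, (fun y => y ^ 2) (x - c) from rfl,
    intervalIntegral.integral_comp_sub_right (fun y => y ^ 2) c, integral_pow]
  norm_num

lemma sq_integral_ge (c u v : ℝ) (h : u ≤ v) : (v-u)^3/12 ≤ ∫ x in u..v, (x - c)^2 := by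
  rw [integral_sq]
  nlinarith [sq_nonneg (u + v - 2*c), sq_nonneg (v - u), sq_nonneg (v - c), sq_nonneg (u - c)]

lemma integral_sq_mid (u v : ℝ) : ∫ x in u..v, (x - (u+v)/2)^2 = (v-u)^3/12 := by
  rw [integral_sq]; ring

lemma cont_inf (γ : Finset ℝ) (h : γ.Nonempty) :
    Continuous (fun x => γ.inf' h (fun c => (x - c)^2)) := by
  induction h using Finset.Nonempty.cons_induction with
  | singleton a => simpa using (by fun_prop : Continuous fun x : ℝ => (x - a)^2)
  | cons a s ha hs ih =>
      have he : ∀ x : ℝ, (Finset.cons a s ha).inf' (Finset.cons_nonempty ha)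
          (fun c => (x - c)^2) = min ((x-a)^2) (s.inf' hs fun c => (x - c)^2) :=
        fun x => Finset.inf'_cons hs _
      simp only [he]
      exact Continuous.min ((continuous_id.sub continuous_const).pow 2) ih

lemma key_lower (a b : ℝ) (hab : a < b) (n : ℕ) (hn : 1 ≤ n) (γ : Finset ℝ)
    (hne : γ.Nonempty) (hcard : γ.card ≤ n) :
    (b-a)^3/(12*(n:ℝ)^2) ≤ ∫ x in a..b, γ.inf' hne (fun c => (x - c)^2) := by
  set f := fun x => γ.inf' hne (fun c => (x - c)^2) with hf
  set l := γ.sort (· ≤ ·) with hl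
  set m := γ.card with hm
  have hlen : l.length = m := Finset.length_sort _
  have hm1 : 1 ≤ m := Finset.card_pos.mpr hne
  set c : ℕ → ℝ := fun i => l.getD i 0 with hcdef
  have hcg : ∀ i (hi : i < m), c i = l.get ⟨i, by omega⟩ := by
    intro i hi
    simp [hcdef, List.getD_eq_get, hlen, hi]
  have hmemc : ∀ i, i < m → c i ∈ γ := by
    intro i hi
    rw [hcg i hi]
    exact (Finset.mem_sort _).mp (l.get_mem _)
  have hmono : ∀ i j, i < j → j < m → c i < c j := by
    intro i j hij hj
    rw [hcg i (hij.trans hj), hcg j hj]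
    exact (Finset.sortedLT_sort γ).pairwise.rel_get_of_lt (by simpa using hij)
  have hmono' : ∀ i j, i ≤ j → j < m → c i ≤ c j := by
    intro i j hij hj
    rcases eq_or_lt_of_le hij with rfl | h
    · exact le_rfl
    · exact (hmono i j h hj).le
  have hsurj : ∀ x ∈ γ, ∃ i, i < m ∧ c i = x := by
    intro x hx
    have : x ∈ l := (Finset.mem_sort (· ≤ ·)).mpr hx
    obtain ⟨k, hk⟩ := List.mem_iff_get.mp this
    exact ⟨k.1, by omega, by rw [hcg k.1 (by omega)]; exact hk⟩
  set t : ℕ → ℝ := fun i => if i = 0 then a else if m ≤ i then b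
      else max a (min b ((c (i-1) + c i)/2)) with htdef
  have ht0 : t 0 = a := by simp [htdef]
  have htm : t m = b := by simp [htdef, show m ≠ 0 by omega]
  have hta : ∀ i, a ≤ t i := by
    intro i
    simp only [htdef]
    split
    · exact le_rfl
    · split
      · exact hab.le
      · exact le_max_left _ _
  have htb : ∀ i, t i ≤ b := by
    intro i
    simp only [htdef]
    split
    · exact hab.le
    · split
      · exact le_rfl
      · exact max_le hab.le (min_le_left _ _)
  have htmono : ∀ i, t i ≤ t (i+1) := by
    intro i
    rcases Nat.eq_zero_or_pos i with rfl | hi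
    · rw [ht0]; exact hta 1
    · by_cases him : m ≤ i
      · have h1 : t i = b := by simp [htdef, him, show i ≠ 0 by omega]
        have h2 : t (i+1) = b := by simp [htdef, show m ≤ i + 1 by omega]
        rw [h1, h2]
      · by_cases him1 : m ≤ i + 1
        · have : t (i+1) = b := by simp [htdef, him1]
          rw [this]; exact htb i
        · have h1 : t i = max a (min b ((c (i-1) + c i)/2)) := by
            simp [htdef, him, show i ≠ 0 by omega]
          have h2 : t (i+1) = max a (min b ((c i + c (i+1))/2)) := by
            simp [htdef, him1]
          rw [h1, h2]
          have : c (i-1) ≤ c (i+1) := hmono' (i-1) (i+1) (by omega) (by omega)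
          have hcc : (c (i-1) + c i)/2 ≤ (c i + c (i+1))/2 := by
            have : c (i-1) ≤ c (i+1) := this
            have h3 : c (i-1+1) = c i := by congr 1; omega
            linarith
          exact max_le_max le_rfl (min_le_min le_rfl hcc)
  have hkey : ∀ i, i < m → t i < t (i+1) → ∀ x ∈ Icc (t i) (t (i+1)),
      ∀ d ∈ γ, (x - c i)^2 ≤ (x - d)^2 := by
    intro i him hlt x hx d hd
    obtain ⟨k, hk, rfl⟩ := hsurj d hd
    rcases lt_trichotomy k i with hki | rfl | hik
    · have hi1 : 1 ≤ i := by omega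
      have hck : c k ≤ c (i-1) := hmono' k (i-1) (by omega) (by omega)
      have hki' : c k < c i := hmono k i hki him
      have hti : t i = max a (min b ((c (i-1) + c i)/2)) := by
        simp [htdef, show i ≠ 0 by omega, show ¬ (m ≤ i) by omega]
      rcases le_or_gt ((c (i-1) + c i)/2) b with hmb | hmb
      · have hxm : (c (i-1) + c i)/2 ≤ x := by
          have : t i = max a ((c (i-1) + c i)/2) := by rw [hti, min_eq_right hmb]
          have hx1 := hx.1
          rw [this] at hx1
          exact (le_max_right _ _).trans hx1
        nlinarith [hx.1, hx.2]
      · exfalso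
        have : t i = b := by rw [hti, min_eq_left hmb.le, max_eq_right hab.le]
        have := htb (i+1)
        linarith [hlt, this, htb (i+1), ‹t i = b›]
    · exact le_rfl
    · have hi1 : i + 1 < m := by omega
      have hck : c (i+1) ≤ c k := hmono' (i+1) k (by omega) (by omega)
      have hki' : c i < c k := hmono i k hik hk
      have hti : t (i+1) = max a (min b ((c i + c (i+1))/2)) := by
        have : (i+1) - 1 = i := by omega
        simp [htdef, show ¬ (m ≤ i + 1) by omega, this]
      rcases le_or_gt a (min b ((c i + c (i+1))/2)) with hmb | hmb
      · have hxm : x ≤ (c i + c (i+1))/2 := by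
          have h2 : t (i+1) = min b ((c i + c (i+1))/2) := by rw [hti, max_eq_right hmb]
          have hx2 := hx.2
          rw [h2] at hx2
          exact hx2.trans (min_le_right _ _)
        nlinarith [hx.1, hx.2]
      · exfalso
        have : t (i+1) = a := by rw [hti, max_eq_left hmb.le]
        linarith [hta i, hlt]
  have hcont : Continuous f := cont_inf γ hne
  have hint : ∀ u v : ℝ, IntervalIntegrable f volume u v :=
    fun u v => hcont.intervalIntegrable u v
  have hper : ∀ i, i < m → (t (i+1) - t i)^3/12 ≤ ∫ x in t i..t (i+1), f x := by
    intro i him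
    rcases eq_or_lt_of_le (htmono i) with heq | hlt
    · rw [← heq, intervalIntegral.integral_same, sub_self]
      norm_num
    · calc (t (i+1) - t i)^3/12 ≤ ∫ x in t i..t (i+1), (x - c i)^2 :=
          sq_integral_ge _ _ _ (htmono i)
        _ ≤ ∫ x in t i..t (i+1), f x := by
          apply intervalIntegral.integral_mono_on (htmono i)
            (((continuous_id.sub continuous_const).pow 2).intervalIntegrable _ _)
            (hint _ _)
          intro x hx
          exact Finset.le_inf' hne _ (fun d hd => hkey i him hlt x hx d hd)
  have hsum : ∫ x in a..b, f x = ∑ i ∈ Finset.range m, ∫ x in t i..t (i+1), f x := by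
    rw [intervalIntegral.sum_integral_adjacent_intervals (fun k _ => hint _ _), ht0, htm]
  have h1 : ∑ i ∈ Finset.range m, (t (i+1) - t i)^3/12 ≤ ∫ x in a..b, f x := by
    rw [hsum]
    exact Finset.sum_le_sum (fun i hi => hper i (Finset.mem_range.mp hi))
  have h2 : (b-a)^3/(12*(m:ℝ)^2) ≤ ∑ i ∈ Finset.range m, (t (i+1) - t i)^3/12 := by
    have hpp := pow_sum_div_card_le_sum_pow (s := Finset.range m)
      (f := fun i => t (i+1) - t i) (fun i _ => sub_nonneg.mpr (htmono i)) 2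
    rw [Finset.sum_range_sub t m, ht0, htm, Finset.card_range] at hpp
    norm_num at hpp
    rw [show ∑ i ∈ Finset.range m, (t (i+1) - t i)^3/12
        = (∑ i ∈ Finset.range m, (t (i+1) - t i)^3)/12 from (Finset.sum_div _ _ _).symm]
    rw [show (b-a)^3/(12*(m:ℝ)^2) = ((b-a)^3/(m:ℝ)^2)/12 by ring]
    linarith
  have h3 : (b-a)^3/(12*(n:ℝ)^2) ≤ (b-a)^3/(12*(m:ℝ)^2) := by
    apply div_le_div_of_nonneg_left (pow_pos (sub_pos.mpr hab) 3).le (by positivity)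
    have : (m:ℝ) ≤ (n:ℝ) := Nat.cast_le.mpr hcard
    nlinarith [show (0:ℝ) < (m:ℝ) by exact_mod_cast hm1]
  linarith

lemma key_upper (a b : ℝ) (hab : a < b) (n : ℕ) (hn : 1 ≤ n)
    (hne : ((Finset.range n).image
      (fun j : ℕ => a + (2 * (j : ℝ) + 1) * (b - a) / (2 * n))).Nonempty) :
    ∫ x in a..b, ((Finset.range n).image
        (fun j : ℕ => a + (2 * (j : ℝ) + 1) * (b - a) / (2 * n))).inf' hne
          (fun c => (x - c)^2) ≤ (b-a)^3/(12*(n:ℝ)^2) := by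
  set γ := (Finset.range n).image (fun j : ℕ => a + (2 * (j : ℝ) + 1) * (b - a) / (2 * n))
    with hγ
  set f := fun x => γ.inf' hne (fun c => (x - c)^2) with hf
  have hn0 : (n:ℝ) ≠ 0 := by positivity
  set s : ℕ → ℝ := fun j => a + j * (b - a) / n with hs
  have hs0 : s 0 = a := by simp [hs]
  have hsn : s n = b := by simp only [hs]; rw [mul_div_cancel_left₀ _ hn0]; ring
  have hmid : ∀ j : ℕ, a + (2 * (j : ℝ) + 1) * (b - a) / (2 * n) = (s j + s (j+1))/2 := by
    intro j
    simp only [hs]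
    push_cast
    field_simp
    ring
  have hstep : ∀ j : ℕ, s (j+1) - s j = (b - a)/n := by
    intro j
    simp only [hs]
    push_cast
    field_simp
    ring
  have hsmono : ∀ j : ℕ, s j ≤ s (j+1) := by
    intro j
    have h1 := hstep j
    have h2 : (0:ℝ) < (b-a)/(n:ℝ) := div_pos (sub_pos.mpr hab) (Nat.cast_pos.mpr hn)
    rw [← sub_nonneg, h1]; exact h2.le
  have hcont : Continuous f := cont_inf γ hne
  have hint : ∀ u v : ℝ, IntervalIntegrable f volume u v :=
    fun u v => hcont.intervalIntegrable u v
  have hper : ∀ j, j < n → ∫ x in s j..s (j+1), f x ≤ ((b-a)/n)^3/12 := by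
    intro j hj
    have hmem : (s j + s (j+1))/2 ∈ γ := by
      rw [hγ]
      apply Finset.mem_image.mpr
      exact ⟨j, Finset.mem_range.mpr hj, hmid j⟩
    calc ∫ x in s j..s (j+1), f x ≤ ∫ x in s j..s (j+1), (x - (s j + s (j+1))/2)^2 := by
          apply intervalIntegral.integral_mono_on (hsmono j) (hint _ _)
            (((continuous_id.sub continuous_const).pow 2).intervalIntegrable _ _)
          intro x _
          exact Finset.inf'_le _ hmem
      _ = (s (j+1) - s j)^3/12 := integral_sq_mid _ _
      _ = ((b-a)/n)^3/12 := by rw [hstep j]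
  have hsum : ∫ x in a..b, f x = ∑ j ∈ Finset.range n, ∫ x in s j..s (j+1), f x := by
    rw [intervalIntegral.sum_integral_adjacent_intervals (fun k _ => hint _ _), hs0, hsn]
  rw [hsum]
  calc ∑ j ∈ Finset.range n, ∫ x in s j..s (j+1), f x
      ≤ ∑ j ∈ Finset.range n, ((b-a)/n)^3/12 :=
        Finset.sum_le_sum (fun j hj => hper j (Finset.mem_range.mp hj))
    _ = n * (((b-a)/n)^3/12) := by rw [Finset.sum_const, Finset.card_range, nsmul_eq_mul]
    _ = (b-a)^3/(12*(n:ℝ)^2) := by field_simp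

theorem stmt1 (a b : ℝ) (hab : a < b) (n : ℕ) (hn : 1 ≤ n) :
    IsOptimal (unif a b) n
      ((Finset.range n).image (fun j : ℕ => a + (2 * (j : ℝ) + 1) * (b - a) / (2 * n))) ∧
    quantErr (unif a b) n = (b - a) ^ 2 / (12 * n ^ 2) := by
  set γs := (Finset.range n).image
    (fun j : ℕ => a + (2 * (j : ℝ) + 1) * (b - a) / (2 * n)) with hγs
  have hne : γs.Nonempty :=
    Finset.Nonempty.image (Finset.nonempty_range_iff.mpr (by omega)) _
  have hcard : γs.card ≤ n :=
    le_trans Finset.card_image_le (le_of_eq (Finset.card_range n))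
  have hba : (0:ℝ) < b - a := sub_pos.mpr hab
  have hval : (b-a)⁻¹ * ((b-a)^3/(12*(n:ℝ)^2)) = (b-a)^2/(12*(n:ℝ)^2) := by
    field_simp
  have hupper : distortion (unif a b) γs ≤ (b-a)^2/(12*(n:ℝ)^2) := by
    rw [distortion_eq a b hab γs hne, ← hval]
    exact mul_le_mul_of_nonneg_left (key_upper a b hab n hn hne) (inv_nonneg.mpr hba.le)
  have hlower : ∀ γ : Finset ℝ, ∀ h : γ.Nonempty, γ.card ≤ n →
      (b-a)^2/(12*(n:ℝ)^2) ≤ distortion (unif a b) γ := by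
    intro γ h hc
    rw [distortion_eq a b hab γ h, ← hval]
    exact mul_le_mul_of_nonneg_left (key_lower a b hab n hn γ h hc) (inv_nonneg.mpr hba.le)
  have hdq : distortion (unif a b) γs = (b-a)^2/(12*(n:ℝ)^2) :=
    le_antisymm hupper (hlower γs hne hcard)
  have hmem : (b-a)^2/(12*(n:ℝ)^2) ∈
      {v | ∃ γ : Finset ℝ, γ.Nonempty ∧ γ.card ≤ n ∧ v = distortion (unif a b) γ} :=
    ⟨γs, hne, hcard, hdq.symm⟩
  have hlb : ∀ v ∈ {v | ∃ γ : Finset ℝ, γ.Nonempty ∧ γ.card ≤ n ∧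
      v = distortion (unif a b) γ}, (b-a)^2/(12*(n:ℝ)^2) ≤ v := by
    rintro v ⟨γ, h1, h2, rfl⟩
    exact hlower γ h1 h2
  have hq : quantErr (unif a b) n = (b-a)^2/(12*(n:ℝ)^2) :=
    le_antisymm (csInf_le ⟨_, hlb⟩ hmem) (le_csInf ⟨_, hmem⟩ hlb)
  exact ⟨⟨hne, hcard, hdq.trans hq.symm⟩, hq⟩
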